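/- Let γ>0, p∈(0,1], F₀ a distribution function with 1−F₀(t)>0 for all t and lim_{t→∞}(1−F₀(yt))/(1−F₀(t))=y^{−1/γ} for every y>0, and F=p·F₀. Fix y_1,y_2∈(0,1) and set γ_{y_2,τ}=−1/log_{y_2}((F(y_2²τ)−F(y_2τ))/(F(y_2τ)−F(τ))) and p_{y_1,y_2,τ}=F(τ)+(F(τ)−F(y_1τ))/(y_1^{−1/γ_{y_2,τ}}−1). Then lim_{τ→∞} p_{y_1,y_2,τ} = p. -/
import Mathlib


open Filter

/-- In the mixture cure model `F = p·F₀` with `F₀` heavy tailed with extreme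
value index `γ > 0`, for fixed `y₁, y₂ ∈ (0,1)` the extrapolated non-cure rate
`p_{y₁,y₂,τ} = F(τ) + (F(τ) - F(y₁τ))/(y₁^{-1/γ_{y₂,τ}} - 1)`, where
`γ_{y₂,τ} = -1/log_{y₂}((F(y₂²τ)-F(y₂τ))/(F(y₂τ)-F(τ)))`, converges to `p` as `τ → ∞`. -/
theorem extrapolated_cure_rate_tendsto
    (γ : ℝ) (hγ : 0 < γ) (F₀ : ℝ → ℝ) (hF₀mono : Monotone F₀)
    (hF₀top : Tendsto F₀ atTop (nhds 1)) (hF₀lt : ∀ t, F₀ t < 1)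
    (hRV : ∀ y : ℝ, 0 < y →
      Tendsto (fun t : ℝ => (1 - F₀ (y * t)) / (1 - F₀ t)) atTop (nhds (y ^ (-1 / γ))))
    (p : ℝ) (hp0 : 0 < p) (hp1 : p ≤ 1)
    (y₁ y₂ : ℝ) (hy₁ : y₁ ∈ Set.Ioo (0 : ℝ) 1) (hy₂ : y₂ ∈ Set.Ioo (0 : ℝ) 1) :
    Tendsto (fun τ : ℝ =>
        p * F₀ τ + (p * F₀ τ - p * F₀ (y₁ * τ)) /
          (y₁ ^ (-1 / (-1 / (Real.log ((p * F₀ (y₂ ^ 2 * τ) - p * F₀ (y₂ * τ)) /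
              (p * F₀ (y₂ * τ) - p * F₀ τ)) / Real.log y₂))) - 1))
      atTop (nhds p) := by
  obtain ⟨hy₁0, hy₁1⟩ := hy₁
  obtain ⟨hy₂0, hy₂1⟩ := hy₂
  have hsimp : ∀ x : ℝ, (-1 : ℝ) / (-1 / x) = x := by
    intro x
    rcases eq_or_ne x 0 with h | h
    · simp [h]
    · field_simp
  simp only [hsimp]
  have hexp_neg : (-1 : ℝ) / γ < 0 := div_neg_of_neg_of_pos (by norm_num) hγ
  set a : ℝ := y₂ ^ (-1 / γ) with ha
  have ha1 : 1 < a := by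
    rw [ha]
    exact (Real.one_lt_rpow_iff_of_pos hy₂0).mpr (Or.inr ⟨hy₂1, hexp_neg⟩)
  have ha0 : 0 < a := lt_trans one_pos ha1
  have hSne : ∀ t, (1 : ℝ) - F₀ t ≠ 0 := fun t => sub_ne_zero.mpr (hF₀lt t).ne'
  -- limits of survival ratios
  have h1 : Tendsto (fun τ : ℝ => (1 - F₀ (y₂ * τ)) / (1 - F₀ τ)) atTop (nhds a) :=
    hRV y₂ hy₂0
  have hsq : ((y₂ ^ 2 : ℝ)) ^ (-1 / γ) = a * a := by
    rw [ha, ← Real.rpow_natCast y₂ 2, ← Real.rpow_mul hy₂0.le, ← Real.rpow_add hy₂0]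
    norm_num
    ring_nf
  have h2 : Tendsto (fun τ : ℝ => (1 - F₀ (y₂ ^ 2 * τ)) / (1 - F₀ τ)) atTop (nhds (a * a)) := by
    have := hRV (y₂ ^ 2) (by positivity)
    rwa [hsq] at this
  -- the ratio R
  have key : ∀ τ : ℝ, (p * F₀ (y₂ ^ 2 * τ) - p * F₀ (y₂ * τ)) / (p * F₀ (y₂ * τ) - p * F₀ τ)
      = ((1 - F₀ (y₂ * τ)) / (1 - F₀ τ) - (1 - F₀ (y₂ ^ 2 * τ)) / (1 - F₀ τ)) /
        (1 - (1 - F₀ (y₂ * τ)) / (1 - F₀ τ)) := by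
    intro τ
    have hS := hSne τ
    have hpS : p * (1 - F₀ τ) ≠ 0 := mul_ne_zero hp0.ne' hS
    rw [show p * F₀ (y₂ ^ 2 * τ) - p * F₀ (y₂ * τ)
        = (p * (1 - F₀ τ)) * ((1 - F₀ (y₂ * τ)) / (1 - F₀ τ) - (1 - F₀ (y₂ ^ 2 * τ)) / (1 - F₀ τ))
        from by field_simp; ring,
      show p * F₀ (y₂ * τ) - p * F₀ τ
        = (p * (1 - F₀ τ)) * (1 - (1 - F₀ (y₂ * τ)) / (1 - F₀ τ))
        from by field_simp; ring,
      mul_div_mul_left _ _ hpS]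
  have h1a : (1 : ℝ) - a ≠ 0 := sub_ne_zero.mpr (ne_of_lt ha1)
  have hR : Tendsto (fun τ : ℝ => (p * F₀ (y₂ ^ 2 * τ) - p * F₀ (y₂ * τ)) /
      (p * F₀ (y₂ * τ) - p * F₀ τ)) atTop (nhds a) := by
    have hq := (h1.sub h2).div (tendsto_const_nhds.sub h1) h1a
    have hval : (a - a * a) / (1 - a) = a := by
      rw [show a - a * a = a * (1 - a) by ring, mul_div_assoc, div_self h1a, mul_one]
    simp only [key]
    rwa [hval] at hq
  -- the estimated exponent
  have hlogy₂ : Real.log y₂ ≠ 0 := ne_of_lt (Real.log_neg hy₂0 hy₂1)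
  have hL : Tendsto (fun τ : ℝ => Real.log ((p * F₀ (y₂ ^ 2 * τ) - p * F₀ (y₂ * τ)) /
      (p * F₀ (y₂ * τ) - p * F₀ τ)) / Real.log y₂) atTop (nhds (-1 / γ)) := by
    have := (hR.log ha0.ne').div_const (Real.log y₂)
    rwa [ha, Real.log_rpow hy₂0, mul_div_cancel_right₀ _ hlogy₂] at this
  have hpow : Tendsto (fun τ : ℝ => y₁ ^ (Real.log ((p * F₀ (y₂ ^ 2 * τ) - p * F₀ (y₂ * τ)) /
      (p * F₀ (y₂ * τ) - p * F₀ τ)) / Real.log y₂)) atTop (nhds (y₁ ^ (-1 / γ))) :=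
    tendsto_const_nhds.rpow hL (Or.inl hy₁0.ne')
  have hb1 : 1 < y₁ ^ ((-1 : ℝ) / γ) :=
    (Real.one_lt_rpow_iff_of_pos hy₁0).mpr (Or.inr ⟨hy₁1, hexp_neg⟩)
  have hd : y₁ ^ ((-1 : ℝ) / γ) - 1 ≠ 0 := sub_ne_zero.mpr (ne_of_gt hb1)
  have hDen := hpow.sub (tendsto_const_nhds (x := (1 : ℝ)))
  -- the main limits
  have hA : Tendsto (fun τ : ℝ => p * F₀ τ) atTop (nhds p) := by
    simpa using hF₀top.const_mul p
  have hmul : Tendsto (fun τ : ℝ => y₁ * τ) atTop atTop :=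
    Tendsto.const_mul_atTop hy₁0 tendsto_id
  have hA₁ : Tendsto (fun τ : ℝ => p * F₀ (y₁ * τ)) atTop (nhds p) := by
    simpa using (hF₀top.comp hmul).const_mul p
  have hfrac := (hA.sub hA₁).div hDen hd
  have hfin := hA.add hfrac
  simpa using hfin
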